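/- arXiv:1602.07592 — 2 statements merged into one kernel-verified Lean document; each statement's English description precedes it below -/
import Mathlib

section
/- Let Θ : H → ℝ be three times continuously Fréchet differentiable with uniformly bounded third derivative, i.e., |Θ^{(3)}(ξ)[u,v,w]| ≤ K ‖u‖‖v‖‖w‖ for all ξ, u, v, w ∈ H. Let μ = N(m̄, C) be a Gaussian measure on H, and let R(m) = Θ(m) − Θ_quad(m) be the remainder of the second-order Taylor expansion about m̄. Then ∫_H |R(m)| μ(dm) ≤ √3 · K · (Tr C)^{3/2}. -/
open MeasureTheory RealInnerProductSpace

open Real ProbabilityTheory NNReal ENNReal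


lemma integrable_pow_mul_exp_neg_mul_sq' {b : ℝ} (hb : 0 < b) (k : ℕ) :
    Integrable (fun x : ℝ => x ^ k * Real.exp (-b * x ^ 2)) := by
  have := integrable_rpow_mul_exp_neg_mul_sq hb (s := (k : ℝ)) (lt_of_lt_of_le neg_one_lt_zero (Nat.cast_nonneg k))
  simpa [Real.rpow_natCast] using this

lemma integral_pow_mul_exp_neg_mul_sq' {b : ℝ} (hb : 0 < b) {k : ℕ} (hk : Even k) :
    ∫ x : ℝ, x ^ k * Real.exp (-b * x ^ 2) =
      b ^ (-((k : ℝ) + 1) / 2) * Real.Gamma (((k : ℝ) + 1) / 2) := by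
  have h1 : (fun x : ℝ => x ^ k * Real.exp (-b * x ^ 2))
      = fun x : ℝ => |x| ^ k * Real.exp (-b * |x| ^ 2) := by
    ext x; rw [hk.pow_abs, sq_abs]
  rw [h1, integral_comp_abs (f := fun x : ℝ => x ^ k * Real.exp (-b * x ^ 2))]
  have h2 : ∫ x in Set.Ioi (0:ℝ), x ^ k * Real.exp (-b * x ^ 2)
      = ∫ x in Set.Ioi (0:ℝ), x ^ (k : ℝ) * Real.exp (-b * x ^ (2:ℝ)) := by
    refine setIntegral_congr_fun measurableSet_Ioi (fun x hx => ?_)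
    rw [Real.rpow_natCast, show ((2:ℝ)) = ((2:ℕ):ℝ) by norm_num, Real.rpow_natCast]
  rw [h2, integral_rpow_mul_exp_neg_mul_rpow (by norm_num) (lt_of_lt_of_le neg_one_lt_zero (Nat.cast_nonneg k)) hb]
  ring

lemma lintegral_pow_gaussianReal_centered (v : ℝ≥0) {k : ℕ} (hk : Even k) (hk0 : k ≠ 0) :
    ∫⁻ x, ENNReal.ofReal (x ^ k) ∂(gaussianReal 0 v) =
      ENNReal.ofReal ((2*(v:ℝ)) ^ ((k:ℝ)/2) * Real.Gamma (((k:ℝ)+1)/2) / Real.sqrt π) := by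
  by_cases hv : v = 0
  · subst hv
    rw [gaussianReal_zero_var, lintegral_dirac]
    simp [zero_pow hk0, Real.zero_rpow (div_ne_zero (Nat.cast_ne_zero.mpr hk0) two_ne_zero)]
  · have hv' : (0:ℝ) < v := by positivity
    set b : ℝ := (2 * (v:ℝ))⁻¹ with hbdef
    have hb : 0 < b := by positivity
    rw [gaussianReal_of_var_ne_zero _ hv,
      lintegral_withDensity_eq_lintegral_mul _ (measurable_gaussianPDF _ _)
        (by fun_prop)]
    have hpt : ∀ x : ℝ, (gaussianPDF 0 v * fun x => ENNReal.ofReal (x ^ k)) x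
        = ENNReal.ofReal ((√(2 * π * v))⁻¹ * (x ^ k * Real.exp (-b * x ^ 2))) := by
      intro x
      simp only [Pi.mul_apply, gaussianPDF, ← ENNReal.ofReal_mul (gaussianPDFReal_nonneg _ _ _)]
      congr 1
      rw [gaussianPDFReal]
      have : -(x - 0) ^ 2 / (2 * (v:ℝ)) = -b * x ^ 2 := by
        rw [hbdef]; field_simp
        ring
      rw [this]; ring
    rw [lintegral_congr hpt]
    have hInt : Integrable (fun x : ℝ =>
        (√(2 * π * v))⁻¹ * (x ^ k * Real.exp (-b * x ^ 2))) :=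
      (integrable_pow_mul_exp_neg_mul_sq' hb k).const_mul _
    rw [← ofReal_integral_eq_lintegral_ofReal hInt
      (Filter.Eventually.of_forall (fun x => mul_nonneg (by positivity) (mul_nonneg (hk.pow_nonneg x) (Real.exp_nonneg _))))]
    congr 1
    rw [integral_const_mul, integral_pow_mul_exp_neg_mul_sq' hb hk]
    have hbpow : b ^ (-((k:ℝ) + 1) / 2) = (2*(v:ℝ)) ^ (((k:ℝ) + 1) / 2) := by
      rw [hbdef, Real.inv_rpow (by positivity), ← Real.rpow_neg (by positivity), neg_div, neg_neg]
    have hsqrt : √(2 * π * v) = (2*(v:ℝ)) ^ ((1:ℝ)/2) * √π := by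
      rw [show 2 * π * (v:ℝ) = (2*(v:ℝ)) * π by ring, Real.sqrt_mul (by positivity),
        Real.sqrt_eq_rpow]
    rw [hbpow, hsqrt]
    rw [show (((k:ℝ)+1)/2) = (k:ℝ)/2 + (1:ℝ)/2 by ring, Real.rpow_add (by positivity)]
    have h2 : ((2*(v:ℝ)) ^ ((1:ℝ)/2)) ≠ 0 := by positivity
    have h3 : √π ≠ 0 := by positivity
    field_simp

lemma lintegral_pow_gaussianReal_shift (c : ℝ) (v : ℝ≥0) {k : ℕ} (hk : Even k) (hk0 : k ≠ 0) :
    ∫⁻ x, ENNReal.ofReal ((x - c) ^ k) ∂(gaussianReal c v) =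
      ENNReal.ofReal ((2*(v:ℝ)) ^ ((k:ℝ)/2) * Real.Gamma (((k:ℝ)+1)/2) / Real.sqrt π) := by
  have hmap : (gaussianReal 0 v).map (· + c) = gaussianReal c v := by
    rw [gaussianReal_map_add_const]; simp
  rw [← hmap, lintegral_map (by fun_prop) (by fun_prop)]
  simpa using lintegral_pow_gaussianReal_centered v hk hk0

lemma lintegral_sq_gaussianReal (c : ℝ) (v : ℝ≥0) :
    ∫⁻ x, ENNReal.ofReal ((x - c) ^ 2) ∂(gaussianReal c v) = ENNReal.ofReal (v:ℝ) := by
  rw [lintegral_pow_gaussianReal_shift c v (by norm_num) (by norm_num)]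
  congr 1
  have h32 : ((2:ℕ):ℝ)/2 = 1 := by norm_num
  have hG : Real.Gamma ((((2:ℕ):ℝ)+1)/2) = √π / 2 := by
    rw [show (((2:ℕ):ℝ)+1)/2 = 1/2 + 1 by norm_num, Real.Gamma_add_one (by norm_num),
      Real.Gamma_one_half_eq]
    ring
  rw [h32, hG, Real.rpow_one]
  have h3 : √π ≠ 0 := by positivity
  field_simp

lemma lintegral_pow4_gaussianReal (c : ℝ) (v : ℝ≥0) :
    ∫⁻ x, ENNReal.ofReal ((x - c) ^ 4) ∂(gaussianReal c v) = ENNReal.ofReal (3*(v:ℝ)^2) := by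
  rw [lintegral_pow_gaussianReal_shift c v (by decide) (by norm_num)]
  congr 1
  have h32 : (((4:ℕ)):ℝ)/2 = 2 := by norm_num
  have hG : Real.Gamma ((((4:ℕ):ℝ)+1)/2) = 3 * √π / 4 := by
    rw [show (((4:ℕ):ℝ)+1)/2 = 3/2 + 1 by norm_num, Real.Gamma_add_one (by norm_num),
      show (3:ℝ)/2 = 1/2 + 1 by norm_num, Real.Gamma_add_one (by norm_num),
      Real.Gamma_one_half_eq]
    ring
  rw [h32, hG, show ((2:ℝ)) = ((2:ℕ):ℝ) by norm_num, Real.rpow_natCast]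
  have h3 : √π ≠ 0 := by positivity
  field_simp
  ring


section Taylor
variable {E : Type*} [NormedAddCommGroup E] [NormedSpace ℝ E]

lemma seg_norm_le {a y z : E} (hz : z ∈ segment ℝ a y) : ‖z - a‖ ≤ ‖y - a‖ := by
  obtain ⟨u, t, hu, ht, hut, rfl⟩ := hz
  have h1 : u • a + t • y - a = t • (y - a) := by
    have hu1 : u = 1 - t := by linarith
    subst hu1; module
  rw [h1, norm_smul, Real.norm_eq_abs, abs_of_nonneg ht]
  nlinarith [norm_nonneg (y - a)]

lemma taylor_two_remainder_bound
    (Θ : E → ℝ) (hΘ : ContDiff ℝ 3 Θ) (K : ℝ) (hK0 : 0 ≤ K)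
    (hK : ∀ (ξ u v w : E), |iteratedFDeriv ℝ 3 Θ ξ ![u, v, w]| ≤ K * (‖u‖ * ‖v‖ * ‖w‖))
    (a m : E) :
    |Θ m - (Θ a + iteratedFDeriv ℝ 1 Θ a ![m - a]
        + (1 / 2) * iteratedFDeriv ℝ 2 Θ a ![m - a, m - a])| ≤ K * ‖m - a‖ ^ 3 := by
  set f1 := fderiv ℝ Θ with hf1
  set f2 := fderiv ℝ f1 with hf2
  have hd0 : Differentiable ℝ Θ := hΘ.differentiable (by norm_num)
  have hc1 : ContDiff ℝ 2 f1 := hΘ.fderiv_right (by norm_num)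
  have hd1 : Differentiable ℝ f1 := hc1.differentiable (by norm_num)
  have hc2 : ContDiff ℝ 1 f2 := hc1.fderiv_right (by norm_num)
  have hd2 : Differentiable ℝ f2 := hc2.differentiable (by norm_num)
  -- identification of the third derivative
  have h3eq : ∀ (ξ u v w : E), fderiv ℝ f2 ξ u v w = iteratedFDeriv ℝ 3 Θ ξ ![u, v, w] := by
    intro ξ u v w
    have h1 : iteratedFDeriv ℝ 3 Θ ξ ![u, v, w]
        = iteratedFDeriv ℝ 2 f1 ξ (Fin.init ![u, v, w]) (![u, v, w] (Fin.last 2)) :=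
      iteratedFDeriv_succ_apply_right _
    have h2 : Fin.init ![u, v, w] = ![u, v] := by
      ext i; fin_cases i <;> rfl
    have h3 : (![u, v, w] : Fin 3 → E) (Fin.last 2) = w := rfl
    rw [h1, h2, h3, iteratedFDeriv_two_apply]
    simp
    rfl
  letI : NormedAddCommGroup (E →L[ℝ] E →L[ℝ] ℝ) := inferInstance
  letI : NormedSpace ℝ (E →L[ℝ] E →L[ℝ] ℝ) := inferInstance
  -- bound on the third derivative
  have hb : ∀ ξ : E, ‖fderiv ℝ f2 ξ‖ ≤ K := by
    intro ξ
    refine ContinuousLinearMap.opNorm_le_bound _ hK0 (fun u => ?_)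
    refine ContinuousLinearMap.opNorm_le_bound _ (by positivity) (fun v => ?_)
    refine ContinuousLinearMap.opNorm_le_bound _ (by positivity) (fun w => ?_)
    rw [Real.norm_eq_abs, h3eq]
    calc |iteratedFDeriv ℝ 3 Θ ξ ![u, v, w]| ≤ K * (‖u‖ * ‖v‖ * ‖w‖) := hK ξ u v w
      _ = K * ‖u‖ * ‖v‖ * ‖w‖ := by ring
  -- Lipschitz bound on the second derivative
  have s1 : ∀ x y : E, ‖f2 x - f2 y‖ ≤ K * ‖x - y‖ := fun x y =>
    convex_univ.norm_image_sub_le_of_norm_fderiv_le (fun z _ => hd2 z)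
      (fun z _ => hb z) (Set.mem_univ y) (Set.mem_univ x)
  -- first-order Taylor bound on the first derivative
  have s2 : ∀ y : E, ‖f1 y - f1 a - f2 a (y - a)‖ ≤ K * ‖y - a‖ ^ 2 := by
    intro y
    set G : E → (E →L[ℝ] ℝ) := fun z => f1 z - f2 a (z - a) with hG
    have hGd : ∀ z : E, HasFDerivAt G (f2 z - f2 a) z := by
      intro z
      have p1 : HasFDerivAt f1 (f2 z) z := (hd1 z).hasFDerivAt
      have p2 : HasFDerivAt (fun z : E => f2 a (z - a)) (f2 a) z := by
        have h := ((f2 a).hasFDerivAt (x := z - a)).comp z ((hasFDerivAt_id z).sub_const a)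
        rw [ContinuousLinearMap.comp_id] at h
        exact h
      exact p1.sub p2
    have key := convex_segment a y |>.norm_image_sub_le_of_norm_fderiv_le
      (f := G) (C := K * ‖y - a‖)
      (fun z _ => (hGd z).differentiableAt)
      (fun z hz => by
        rw [(hGd z).fderiv]
        exact le_trans (s1 z a) (by
          have := seg_norm_le hz
          nlinarith [norm_nonneg (z - a)]))
      (left_mem_segment ℝ a y) (right_mem_segment ℝ a y)
    have hGy : G y - G a = f1 y - f1 a - f2 a (y - a) := by
      simp only [hG, sub_self, map_zero]
      abel
    rw [hGy] at key
    calc ‖f1 y - f1 a - f2 a (y - a)‖ ≤ K * ‖y - a‖ * ‖y - a‖ := key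
      _ = K * ‖y - a‖ ^ 2 := by ring
  -- symmetry of the second derivative
  have hsymm : ∀ u v : E, f2 a u v = f2 a v u :=
    second_derivative_symmetric (fun y => (hd0 y).hasFDerivAt) ((hd1 a).hasFDerivAt)
  -- second-order Taylor bound on Θ
  set F : E → ℝ := fun z => Θ z - f1 a (z - a) - (1/2) * f2 a (z - a) (z - a) with hFdef
  have hFd : ∀ z : E, HasFDerivAt F (f1 z - f1 a - f2 a (z - a)) z := by
    intro z
    have p1 : HasFDerivAt Θ (f1 z) z := (hd0 z).hasFDerivAt
    have p2 : HasFDerivAt (fun z : E => f1 a (z - a)) (f1 a) z := by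
      have h := ((f1 a).hasFDerivAt (x := z - a)).comp z ((hasFDerivAt_id z).sub_const a)
      rw [ContinuousLinearMap.comp_id] at h
      exact h
    have p3 : HasFDerivAt (fun z : E => f2 a (z - a) (z - a))
        (f2 a (z - a) + f2 a (z - a)) z := by
      have pc : HasFDerivAt (fun z : E => f2 a (z - a)) (f2 a) z := by
        have h := ((f2 a).hasFDerivAt (x := z - a)).comp z ((hasFDerivAt_id z).sub_const a)
        rw [ContinuousLinearMap.comp_id] at h
        exact h
      have pu : HasFDerivAt (fun z : E => z - a) (ContinuousLinearMap.id ℝ E) z := by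
        simpa using (hasFDerivAt_id z).sub_const a
      have h := pc.clm_apply pu
      have hflip : (f2 a).flip (z - a) = f2 a (z - a) := by
        ext w
        simp only [ContinuousLinearMap.flip_apply]
        exact hsymm w (z - a)
      rw [ContinuousLinearMap.comp_id, hflip] at h
      exact h
    have p4 : HasFDerivAt (fun z : E => (1/2 : ℝ) * f2 a (z - a) (z - a))
        (f2 a (z - a)) z := by
      have h := p3.const_mul (1/2 : ℝ)
      refine h.congr_fderiv ?_
      ext w
      simp only [ContinuousLinearMap.smul_apply, ContinuousLinearMap.add_apply, smul_eq_mul]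
      ring
    exact (p1.sub p2).sub p4
  have key := convex_segment a m |>.norm_image_sub_le_of_norm_fderiv_le
    (f := F) (C := K * ‖m - a‖ ^ 2)
    (fun z _ => (hFd z).differentiableAt)
    (fun z hz => by
      rw [(hFd z).fderiv]
      refine le_trans (s2 z) ?_
      have h1 := seg_norm_le hz
      have h2 : ‖z - a‖ ^ 2 ≤ ‖m - a‖ ^ 2 := by nlinarith [norm_nonneg (z - a)]
      exact mul_le_mul_of_nonneg_left h2 hK0)
    (left_mem_segment ℝ a m) (right_mem_segment ℝ a m)
  have hFm : F m - F a = Θ m - (Θ a + iteratedFDeriv ℝ 1 Θ a ![m - a]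
      + (1 / 2) * iteratedFDeriv ℝ 2 Θ a ![m - a, m - a]) := by
    have e1 : iteratedFDeriv ℝ 1 Θ a ![m - a] = f1 a (m - a) := by
      rw [iteratedFDeriv_one_apply]; rfl
    have e2 : iteratedFDeriv ℝ 2 Θ a ![m - a, m - a] = f2 a (m - a) (m - a) := by
      rw [iteratedFDeriv_two_apply]; rfl
    have hFa : F a = Θ a := by simp [hFdef]
    have hFm' : F m = Θ m - f1 a (m - a) - 1/2 * f2 a (m - a) (m - a) := rfl
    rw [hFa, hFm', e1, e2]
    ring
  rw [hFm] at key
  rw [Real.norm_eq_abs] at key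
  calc |Θ m - (Θ a + iteratedFDeriv ℝ 1 Θ a ![m - a]
      + (1 / 2) * iteratedFDeriv ℝ 2 Θ a ![m - a, m - a])| ≤ K * ‖m - a‖ ^ 2 * ‖m - a‖ := key
    _ = K * ‖m - a‖ ^ 3 := by ring

end Taylor


noncomputable section AuxMain

variable {H : Type*} [NormedAddCommGroup H] [InnerProductSpace ℝ H] [CompleteSpace H]
    [TopologicalSpace.SeparableSpace H] [MeasurableSpace H] [BorelSpace H]

-- countability of a Hilbert basis index in a separable space
lemma hilbertBasis_countable {ι : Type*} (e : HilbertBasis ι ℝ H) : Countable ι := by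
  refine Pairwise.countable_of_isOpen_disjoint (s := fun i => Metric.ball (e i) 2⁻¹)
    (fun i j hij => ?_) (fun i => Metric.isOpen_ball)
    (fun i => Metric.nonempty_ball.2 (by norm_num))
  refine Metric.ball_disjoint_ball ?_
  have h1 : ‖e i‖ = 1 := e.orthonormal.1 i
  have h1' : ‖e j‖ = 1 := e.orthonormal.1 j
  have h2 : ⟪e i, e j⟫ = 0 := e.orthonormal.2 hij
  have hsq : ‖e i - e j‖ ^ 2 = 2 := by
    rw [norm_sub_sq_real, h1, h1', h2]; ring
  have : (1:ℝ) ≤ ‖e i - e j‖ := by nlinarith [norm_nonneg (e i - e j)]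
  rw [dist_eq_norm]
  linarith [this]
  
end AuxMain



/-- `μ` is the Gaussian measure on the Hilbert space `H` with mean `a` and covariance
operator `C`, characterized by one-dimensional projections. -/
def IsGaussianH {H : Type*} [NormedAddCommGroup H] [InnerProductSpace ℝ H]
    [MeasurableSpace H] (μ : Measure H) (a : H) (C : H →L[ℝ] H) : Prop :=
  IsProbabilityMeasure μ ∧
  ∀ b : H, μ.map (fun s => ⟪s, b⟫) =
    ProbabilityTheory.gaussianReal ⟪a, b⟫ (Real.toNNReal ⟪C b, b⟫)

/-- If `Θ : H → ℝ` is three times continuously Fréchet differentiable with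
uniformly bounded third derivative (bound `K`), `μ = N(mbar, C)` is Gaussian, and `R` is the
remainder of the second-order Taylor expansion of `Θ` about `mbar`, then
`∫ |R| dμ ≤ √3 · K · (Tr C)^{3/2}`. -/
theorem expected_taylor_remainder_bound
    {H : Type*} [NormedAddCommGroup H] [InnerProductSpace ℝ H] [CompleteSpace H]
    [TopologicalSpace.SeparableSpace H] [MeasurableSpace H] [BorelSpace H]
    (Θ : H → ℝ) (hΘ : ContDiff ℝ 3 Θ)
    (K : ℝ)
    (hK : ∀ (ξ u v w : H), |iteratedFDeriv ℝ 3 Θ ξ ![u, v, w]| ≤ K * (‖u‖ * ‖v‖ * ‖w‖))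
    (mbar : H) (μ : Measure H) (C : H →L[ℝ] H)
    (hCsa : ∀ x y : H, ⟪C x, y⟫ = ⟪x, C y⟫)
    (hCpos : ∀ x : H, 0 ≤ ⟪C x, x⟫)
    (hμ : IsGaussianH μ mbar C)
    {ι : Type*} (e : HilbertBasis ι ℝ H)
    (htr : Summable fun i => ⟪C (e i), e i⟫) :
    ∫ m, |Θ m - (Θ mbar + iteratedFDeriv ℝ 1 Θ mbar ![m - mbar]
        + (1 / 2) * iteratedFDeriv ℝ 2 Θ mbar ![m - mbar, m - mbar])| ∂μ ≤
      Real.sqrt 3 * K * (∑' i, ⟪C (e i), e i⟫) ^ ((3 : ℝ) / 2) := by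
  obtain ⟨hprob, hproj⟩ := hμ
  rcases subsingleton_or_nontrivial H with hsub | hnt
  · -- trivial case: H is a single point
    have h0 : ∀ m : H, |Θ m - (Θ mbar + iteratedFDeriv ℝ 1 Θ mbar ![m - mbar]
        + (1 / 2) * iteratedFDeriv ℝ 2 Θ mbar ![m - mbar, m - mbar])| = 0 := by
      intro m
      have hm : m = mbar := Subsingleton.elim m mbar
      subst hm
      have e1 : iteratedFDeriv ℝ 1 Θ m ![m - m] = 0 :=
        (iteratedFDeriv ℝ 1 Θ m).map_coord_zero 0 (by simp)
      have e2 : iteratedFDeriv ℝ 2 Θ m ![m - m, m - m] = 0 :=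
        (iteratedFDeriv ℝ 2 Θ m).map_coord_zero 0 (by simp)
      rw [e1, e2]
      simp
    have hT : ∀ i, ⟪C (e i), e i⟫ = (0:ℝ) := by
      intro i
      have : e i = 0 := Subsingleton.elim _ _
      simp [this]
    simp only [h0]
    rw [integral_zero]
    simp only [hT, tsum_zero]
    rw [Real.zero_rpow (by norm_num)]
    simp
  · -- main case
    have hK0 : 0 ≤ K := by
      obtain ⟨u, hu⟩ := exists_ne (0 : H)
      have h := hK mbar u u u
      have hn : 0 < ‖u‖ := norm_pos_iff.2 hu
      have hp : 0 < ‖u‖ * ‖u‖ * ‖u‖ := by positivity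
      have h2 : 0 ≤ K * (‖u‖ * ‖u‖ * ‖u‖) :=
        le_trans (abs_nonneg _) h
      by_contra hneg
      push_neg at hneg
      nlinarith [mul_neg_of_neg_of_pos hneg hp]
    have : Countable ι := hilbertBasis_countable e
    set T : ℝ := ∑' i, ⟪C (e i), e i⟫ with hTdef
    have hT0 : 0 ≤ T := tsum_nonneg (fun i => hCpos (e i))
    set c : ι → ℝ := fun i => ⟪mbar, e i⟫ with hcdef
    set v : ι → ℝ≥0 := fun i => Real.toNNReal ⟪C (e i), e i⟫ with hvdef
    have hv : ∀ i, ((v i : ℝ)) = ⟪C (e i), e i⟫ := fun i => Real.coe_toNNReal _ (hCpos _)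
    have hgc : ∀ i, Continuous fun m : H => ⟪m, e i⟫ :=
      fun i => continuous_id.inner continuous_const
    have hgm : ∀ i, Measurable fun m : H => ⟪m, e i⟫ := fun i => (hgc i).measurable
    set A : ι → H → ℝ≥0∞ := fun i m => ENNReal.ofReal ((⟪m, e i⟫ - c i)^2) with hAdef
    have hAmeas : ∀ i, Measurable (A i) :=
      fun i => (((hgm i).sub measurable_const).pow_const 2).ennreal_ofReal
    -- second and fourth moments of the coordinates
    have hXi2 : ∀ i, ∫⁻ m, A i m ∂μ = ENNReal.ofReal (v i) := by
      intro i
      have h := lintegral_map (μ := μ) (g := fun m : H => ⟪m, e i⟫)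
        (f := fun x : ℝ => ENNReal.ofReal ((x - ⟪mbar, e i⟫)^2)) (by fun_prop) (hgm i)
      rw [hproj (e i), lintegral_sq_gaussianReal] at h
      simp only [hAdef, hcdef, hvdef]
      exact h.symm
    have hXi4 : ∀ i, ∫⁻ m, (A i m) ^ (2:ℝ) ∂μ = ENNReal.ofReal (3 * (v i : ℝ)^2) := by
      intro i
      simp only [hAdef, hcdef, hvdef]
      have hpt : ∀ m : H, (ENNReal.ofReal ((⟪m, e i⟫ - ⟪mbar, e i⟫)^2)) ^ (2:ℝ)
          = ENNReal.ofReal ((⟪m, e i⟫ - ⟪mbar, e i⟫)^4) := by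
        intro m
        rw [ENNReal.ofReal_rpow_of_nonneg (by positivity) (by norm_num)]
        congr 1
        rw [show ((2:ℝ)) = ((2:ℕ):ℝ) by norm_num, Real.rpow_natCast]
        ring
      rw [lintegral_congr hpt]
      have h := lintegral_map (μ := μ) (g := fun m : H => ⟪m, e i⟫)
        (f := fun x : ℝ => ENNReal.ofReal ((x - ⟪mbar, e i⟫)^4)) (by fun_prop) (hgm i)
      rw [hproj (e i), lintegral_pow4_gaussianReal] at h
      exact h.symm
    -- Parseval
    have hnorm2 : ∀ m : H, ENNReal.ofReal (‖m - mbar‖^2) = ∑' i, A i m := by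
      intro m
      have hsum : HasSum (fun i => ⟪m - mbar, e i⟫ * ⟪e i, m - mbar⟫)
          ⟪m - mbar, m - mbar⟫ := e.hasSum_inner_mul_inner _ _
      have hsum2 : HasSum (fun i => (⟪m, e i⟫ - c i)^2) (‖m - mbar‖^2) := by
        have h1 : (fun i => ⟪m - mbar, e i⟫ * ⟪e i, m - mbar⟫)
            = fun i => (⟪m, e i⟫ - c i)^2 := by
          funext i
          rw [real_inner_comm (m - mbar) (e i), inner_sub_left]
          simp only [hcdef]
          ring
        have h2 : ⟪m - mbar, m - mbar⟫ = ‖m - mbar‖^2 := real_inner_self_eq_norm_sq _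
        rw [h1, h2] at hsum
        exact hsum
      rw [← hsum2.tsum_eq, ENNReal.ofReal_tsum_of_nonneg (fun i => sq_nonneg _)
        hsum2.summable]
    have hofT : ∑' i, ENNReal.ofReal (v i) = ENNReal.ofReal T := by
      rw [hTdef, ENNReal.ofReal_tsum_of_nonneg (fun i => hCpos _) htr]
      exact tsum_congr fun i => by rw [hv]
    -- second moment
    have I2 : ∫⁻ m, ENNReal.ofReal (‖m - mbar‖^2) ∂μ = ENNReal.ofReal T := by
      rw [lintegral_congr hnorm2, lintegral_tsum (fun i => (hAmeas i).aemeasurable)]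
      rw [← hofT]
      exact tsum_congr hXi2
    -- fourth moment
    have I4 : ∫⁻ m, ENNReal.ofReal (‖m - mbar‖^4) ∂μ ≤ 3 * (ENNReal.ofReal T)^2 := by
      have hpt : ∀ m : H, ENNReal.ofReal (‖m - mbar‖^4) = ∑' i, ∑' j, A i m * A j m := by
        intro m
        have h1 : ENNReal.ofReal (‖m - mbar‖^4) = (ENNReal.ofReal (‖m - mbar‖^2))^2 := by
          rw [← ENNReal.ofReal_pow (by positivity)]
          norm_num [← pow_mul]
        rw [h1, hnorm2 m, sq, ← ENNReal.tsum_mul_right]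
        exact tsum_congr fun i => ENNReal.tsum_mul_left.symm
      rw [lintegral_congr hpt]
      rw [lintegral_tsum (f := fun i m => ∑' j, A i m * A j m) (fun i => ((Measurable.ennreal_tsum
        (fun j => (hAmeas i).mul (hAmeas j)))).aemeasurable)]
      have hstep : ∀ i, ∫⁻ m, ∑' j, A i m * A j m ∂μ
          ≤ ∑' j, ENNReal.ofReal (Real.sqrt 3 * v i) * ENNReal.ofReal (Real.sqrt 3 * v j) := by
        intro i
        rw [lintegral_tsum (f := fun j m => A i m * A j m) (fun j => ((hAmeas i).mul (hAmeas j)).aemeasurable)]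
        refine ENNReal.tsum_le_tsum fun j => ?_
        have hcs := ENNReal.lintegral_mul_le_Lp_mul_Lq μ
          Real.HolderConjugate.two_two
          (hAmeas i).aemeasurable (hAmeas j).aemeasurable
        simp only [Pi.mul_apply] at hcs
        refine le_trans hcs ?_
        rw [hXi4 i, hXi4 j]
        have hkey : ∀ l, (ENNReal.ofReal (3 * (v l : ℝ)^2)) ^ ((1:ℝ)/2)
            = ENNReal.ofReal (Real.sqrt 3 * v l) := by
          intro l
          rw [ENNReal.ofReal_rpow_of_nonneg (by positivity) (by norm_num)]
          congr 1
          rw [← Real.sqrt_eq_rpow, Real.sqrt_mul (by norm_num), Real.sqrt_sq (v l).coe_nonneg]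
        rw [hkey i, hkey j]
      refine le_trans (ENNReal.tsum_le_tsum hstep) ?_
      have hred : ∀ l, ENNReal.ofReal (Real.sqrt 3 * v l)
          = ENNReal.ofReal (Real.sqrt 3) * ENNReal.ofReal (v l) := by
        intro l; rw [ENNReal.ofReal_mul (Real.sqrt_nonneg 3)]
      calc ∑' i, ∑' j, ENNReal.ofReal (Real.sqrt 3 * v i) * ENNReal.ofReal (Real.sqrt 3 * v j)
          = (∑' i, ENNReal.ofReal (Real.sqrt 3 * v i)) * (∑' j, ENNReal.ofReal (Real.sqrt 3 * v j)) := by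
            rw [← ENNReal.tsum_mul_right]
            exact tsum_congr fun i => ENNReal.tsum_mul_left
        _ = (ENNReal.ofReal (Real.sqrt 3))^2 * (ENNReal.ofReal T)^2 := by
            simp only [hred]
            rw [ENNReal.tsum_mul_left, hofT]
            ring
        _ = 3 * (ENNReal.ofReal T)^2 := by
            congr 1
            rw [← ENNReal.ofReal_pow (Real.sqrt_nonneg 3), Real.sq_sqrt (by norm_num)]
            simp [ENNReal.ofReal_ofNat]
        _ ≤ 3 * (ENNReal.ofReal T)^2 := le_rfl
    -- third moment via Cauchy-Schwarz
    have I3 : ∫⁻ m, ENNReal.ofReal (‖m - mbar‖^3) ∂μ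
        ≤ ENNReal.ofReal (Real.sqrt 3 * T ^ ((3:ℝ)/2)) := by
      have hcs := ENNReal.lintegral_mul_le_Lp_mul_Lq μ
        Real.HolderConjugate.two_two
        (f := fun m => ENNReal.ofReal ‖m - mbar‖)
        (g := fun m => ENNReal.ofReal (‖m - mbar‖^2))
        (by fun_prop) (by fun_prop)
      have h1 : ∀ m : H, ENNReal.ofReal (‖m - mbar‖^3)
          = ENNReal.ofReal ‖m - mbar‖ * ENNReal.ofReal (‖m - mbar‖^2) := by
        intro m
        rw [← ENNReal.ofReal_mul (norm_nonneg _)]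
        ring_nf
      have h2 : ∀ m : H, (ENNReal.ofReal ‖m - mbar‖) ^ (2:ℝ)
          = ENNReal.ofReal (‖m - mbar‖^2) := by
        intro m
        rw [ENNReal.ofReal_rpow_of_nonneg (norm_nonneg _) (by norm_num)]
        congr 1
        rw [show ((2:ℝ)) = ((2:ℕ):ℝ) by norm_num, Real.rpow_natCast]
      have h3 : ∀ m : H, (ENNReal.ofReal (‖m - mbar‖^2)) ^ (2:ℝ)
          = ENNReal.ofReal (‖m - mbar‖^4) := by
        intro m
        rw [ENNReal.ofReal_rpow_of_nonneg (by positivity) (by norm_num)]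
        congr 1
        rw [show ((2:ℝ)) = ((2:ℕ):ℝ) by norm_num, Real.rpow_natCast]
        ring
      simp only [Pi.mul_apply] at hcs
      calc ∫⁻ m, ENNReal.ofReal (‖m - mbar‖^3) ∂μ
          = ∫⁻ m, ENNReal.ofReal ‖m - mbar‖ * ENNReal.ofReal (‖m - mbar‖^2) ∂μ :=
            lintegral_congr h1
        _ ≤ (∫⁻ m, (ENNReal.ofReal ‖m - mbar‖) ^ (2:ℝ) ∂μ) ^ ((1:ℝ)/2)
            * (∫⁻ m, (ENNReal.ofReal (‖m - mbar‖^2)) ^ (2:ℝ) ∂μ) ^ ((1:ℝ)/2) := hcs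
        _ = (∫⁻ m, ENNReal.ofReal (‖m - mbar‖^2) ∂μ) ^ ((1:ℝ)/2)
            * (∫⁻ m, ENNReal.ofReal (‖m - mbar‖^4) ∂μ) ^ ((1:ℝ)/2) := by
            rw [lintegral_congr h2, lintegral_congr h3]
        _ ≤ (ENNReal.ofReal T) ^ ((1:ℝ)/2) * (3 * (ENNReal.ofReal T)^2) ^ ((1:ℝ)/2) := by
            exact mul_le_mul' (ENNReal.rpow_le_rpow I2.le (by norm_num))
              (ENNReal.rpow_le_rpow I4 (by norm_num))
        _ = ENNReal.ofReal (Real.sqrt 3 * T ^ ((3:ℝ)/2)) := by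
            rw [ENNReal.ofReal_rpow_of_nonneg hT0 (by norm_num)]
            have h5 : ((3:ℝ≥0∞) * (ENNReal.ofReal T)^2) = ENNReal.ofReal (3 * T^2) := by
              rw [ENNReal.ofReal_mul (by norm_num), ENNReal.ofReal_pow hT0]
              simp [ENNReal.ofReal_ofNat]
            rw [h5, ENNReal.ofReal_rpow_of_nonneg (by positivity) (by norm_num)]
            rw [← ENNReal.ofReal_mul (by positivity)]
            congr 1
            rw [← Real.sqrt_eq_rpow (3 * T^2), Real.sqrt_mul (by norm_num),
              Real.sqrt_sq hT0]
            rw [show ((3:ℝ)/2) = (1:ℝ)/2 + 1 by norm_num, Real.rpow_add' hT0 (by norm_num)]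
            rw [Real.rpow_one, ← Real.sqrt_eq_rpow]
            ring
    -- assemble
    set R : H → ℝ := fun m => |Θ m - (Θ mbar + iteratedFDeriv ℝ 1 Θ mbar ![m - mbar]
        + (1 / 2) * iteratedFDeriv ℝ 2 Θ mbar ![m - mbar, m - mbar])| with hRdef
    have hRbound : ∀ m : H, R m ≤ K * ‖m - mbar‖^3 :=
      fun m => taylor_two_remainder_bound Θ hΘ K hK0 hK mbar m
    have hRcont : Continuous R := by
      have hc1 : Continuous fun m : H => (![m - mbar] : Fin 1 → H) := by
        refine continuous_pi fun i => ?_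
        fin_cases i
        simpa using continuous_sub_right mbar
      have hc2 : Continuous fun m : H => (![m - mbar, m - mbar] : Fin 2 → H) := by
        refine continuous_pi fun i => ?_
        fin_cases i <;> simpa using continuous_sub_right mbar
      refine Continuous.abs ?_
      refine (hΘ.continuous).sub ?_
      refine (continuous_const.add ((iteratedFDeriv ℝ 1 Θ mbar).cont.comp hc1)).add ?_
      exact continuous_const.mul ((iteratedFDeriv ℝ 2 Θ mbar).cont.comp hc2)
    have hRmeas : Measurable R := hRcont.measurable
    have hRnn : ∀ m, 0 ≤ R m := fun m => abs_nonneg _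
    have hle1 : ∫ m, R m ∂μ ≤ (∫⁻ m, ENNReal.ofReal (R m) ∂μ).toReal := by
      by_cases hint : Integrable R μ
      · rw [integral_eq_lintegral_of_nonneg_ae (Filter.Eventually.of_forall hRnn)
          hRmeas.aestronglyMeasurable]
      · rw [integral_undef hint]
        exact ENNReal.toReal_nonneg
    have hle2 : ∫⁻ m, ENNReal.ofReal (R m) ∂μ
        ≤ ENNReal.ofReal (K * (Real.sqrt 3 * T ^ ((3:ℝ)/2))) := by
      calc ∫⁻ m, ENNReal.ofReal (R m) ∂μ
          ≤ ∫⁻ m, ENNReal.ofReal K * ENNReal.ofReal (‖m - mbar‖^3) ∂μ := by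
            refine lintegral_mono fun m => ?_
            rw [← ENNReal.ofReal_mul hK0]
            exact ENNReal.ofReal_le_ofReal (le_trans (hRbound m) le_rfl)
        _ = ENNReal.ofReal K * ∫⁻ m, ENNReal.ofReal (‖m - mbar‖^3) ∂μ :=
            lintegral_const_mul' _ _ ENNReal.ofReal_ne_top
        _ ≤ ENNReal.ofReal K * ENNReal.ofReal (Real.sqrt 3 * T ^ ((3:ℝ)/2)) :=
            mul_le_mul_right I3 _
        _ = ENNReal.ofReal (K * (Real.sqrt 3 * T ^ ((3:ℝ)/2))) :=
            (ENNReal.ofReal_mul hK0).symm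
    calc ∫ m, R m ∂μ ≤ (∫⁻ m, ENNReal.ofReal (R m) ∂μ).toReal := hle1
      _ ≤ (ENNReal.ofReal (K * (Real.sqrt 3 * T ^ ((3:ℝ)/2)))).toReal :=
          ENNReal.toReal_mono ENNReal.ofReal_ne_top hle2
      _ = K * (Real.sqrt 3 * T ^ ((3:ℝ)/2)) := ENNReal.toReal_ofReal (by positivity)
      _ = Real.sqrt 3 * K * T ^ ((3:ℝ)/2) := by ring
end

section
/- Let Θ : H → ℝ be (p+1) times continuously Fréchet differentiable with uniformly bounded (p+1)-st derivative, and let m be distributed as N(m̄, εC) for ε > 0, with C positive self-adjoint trace-class. Then the expected value of the absolute truncation error of the p-th order Taylor expansion of Θ about m̄ is O(ε^{(p+1)/2}) as ε → 0. -/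
open MeasureTheory RealInnerProductSpace

open Set ProbabilityTheory ENNReal
open scoped NNReal


section PartA

variable {H : Type*} [NormedAddCommGroup H] [InnerProductSpace ℝ H]

lemma fderiv_comp_const_add'' {F : Type*} [NormedAddCommGroup F] [NormedSpace ℝ F]
    (G : H → F) (a x : H) :
    fderiv ℝ (fun y => G (a + y)) x = fderiv ℝ G (a + x) := by
  by_cases h : DifferentiableAt ℝ G (a + x)
  · have h1 : HasFDerivAt (fun y : H => a + y) (ContinuousLinearMap.id ℝ H) x := by
      simpa using (hasFDerivAt_id x).const_add a
    have h2 := h.hasFDerivAt.comp x h1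
    exact h2.fderiv
  · rw [fderiv_zero_of_not_differentiableAt h, fderiv_zero_of_not_differentiableAt]
    intro hc
    apply h
    have hsub : DifferentiableAt ℝ (fun z : H => z - a) (a + x) :=
      differentiableAt_id.sub_const a
    have hcomp := DifferentiableAt.comp (g := fun y => G (a + y)) (f := fun z : H => z - a)
      (a + x) (by simpa using hc) hsub
    have he : ((fun y => G (a + y)) ∘ fun z : H => z - a) = G := by
      funext z; simp
    rwa [he] at hcomp

lemma iteratedFDeriv_comp_const_add' {F : Type*} [NormedAddCommGroup F] [NormedSpace ℝ F]
    (n : ℕ) (f : H → F) (a : H) :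
    (fun x => iteratedFDeriv ℝ n (fun y => f (a + y)) x)
      = fun x => iteratedFDeriv ℝ n f (a + x) := by
  induction n with
  | zero => funext x; ext m; simp [iteratedFDeriv_zero_apply]
  | succ n IH =>
    funext x
    rw [iteratedFDeriv_succ_eq_comp_left, iteratedFDeriv_succ_eq_comp_left]
    simp only [Function.comp_apply]
    congr 1
    rw [show (iteratedFDeriv ℝ n fun y => f (a + y))
        = (fun x => iteratedFDeriv ℝ n f (a + x)) from IH]
    exact fderiv_comp_const_add'' (iteratedFDeriv ℝ n f) a x

end PartA

section PartA2

variable {H : Type*} [NormedAddCommGroup H] [InnerProductSpace ℝ H]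

lemma iteratedDerivWithin_eq_iteratedDeriv'' {g : ℝ → ℝ} {N : ℕ} (hg : ContDiff ℝ (N : ℕ∞) g)
    {s : Set ℝ} (hs : UniqueDiffOn ℝ s) {x : ℝ} (hx : x ∈ s) {n : ℕ} (hn : n ≤ N) :
    iteratedDerivWithin n g s x = iteratedDeriv n g x := by
  have h1 : HasFTaylorSeriesUpToOn (N : ℕ∞) g (ftaylorSeries ℝ g) s :=
    (contDiff_iff_ftaylorSeries.mp hg).hasFTaylorSeriesUpToOn s
  have h2 : ftaylorSeries ℝ g x n = iteratedFDerivWithin ℝ n g s x :=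
    h1.eq_iteratedFDerivWithin_of_uniqueDiffOn (mod_cast hn) hs hx
  rw [iteratedDerivWithin_eq_iteratedFDerivWithin, ← h2, iteratedDeriv_eq_iteratedFDeriv]
  rfl

lemma iteratedDeriv_line {N : ℕ} (f : H → ℝ) (hf : ContDiff ℝ (N : ℕ∞) f) (a v : H) {n : ℕ}
    (hn : n ≤ N) (t : ℝ) :
    iteratedDeriv n (fun t : ℝ => f (a + t • v)) t
      = iteratedFDeriv ℝ n f (a + t • v) (fun _ => v) := by
  set L : ℝ →L[ℝ] H := (ContinuousLinearMap.id ℝ ℝ).smulRight v with hL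
  have hLapp : ∀ c : ℝ, L c = c • v := fun c => rfl
  set Φ : H → ℝ := fun y => f (a + y) with hΦ
  have hΦdiff : ContDiff ℝ (N : ℕ∞) Φ := hf.comp (contDiff_const.add contDiff_id)
  have hgL : (fun t : ℝ => f (a + t • v)) = Φ ∘ L := rfl
  rw [hgL, iteratedDeriv_eq_iteratedFDeriv,
    L.iteratedFDeriv_comp_right hΦdiff t (mod_cast hn)]
  rw [ContinuousMultilinearMap.compContinuousLinearMap_apply]
  have h2 : iteratedFDeriv ℝ n Φ (L t) = iteratedFDeriv ℝ n f (a + t • v) := by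
    have := congrFun (iteratedFDeriv_comp_const_add' n f a) (t • v)
    exact this
  rw [h2]
  congr 1
  funext i
  simp [hLapp]

end PartA2

lemma countable_index_of_hilbertBasis {H : Type*} [NormedAddCommGroup H]
    [InnerProductSpace ℝ H] [TopologicalSpace.SeparableSpace H]
    {ι : Type*} (e : HilbertBasis ι ℝ H) : Countable ι := by
  obtain ⟨D, Dcnt, Ddense⟩ := TopologicalSpace.exists_countable_dense H
  have hchoice : ∀ i : ι, ∃ d ∈ D, dist (e i) d < 1/2 := fun i =>
    Ddense.exists_dist_lt (e i) (by norm_num)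
  choose f hfD hfd using hchoice
  have hsep : ∀ i j : ι, i ≠ j → (1:ℝ) < dist (e i) (e j) := by
    intro i j hij
    have h2 : ‖e i - e j‖^2 = 2 := by
      rw [norm_sub_sq_real]
      have h1 : ‖e i‖ = 1 := e.orthonormal.1 i
      have h1' : ‖e j‖ = 1 := e.orthonormal.1 j
      have h0 : ⟪e i, e j⟫ = 0 := e.orthonormal.2 hij
      rw [h1, h1', h0]; ring
    have hd : dist (e i) (e j) = ‖e i - e j‖ := dist_eq_norm _ _
    nlinarith [dist_nonneg (x := e i) (y := e j)]
  have hinj : Function.Injective fun i => (⟨f i, hfD i⟩ : D) := by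
    intro i j hij
    by_contra hne
    have := hsep i j hne
    have h1 : f i = f j := congrArg Subtype.val hij
    have := dist_triangle (e i) (f i) (e j)
    rw [h1] at this
    have := dist_comm (f j) (e j)
    have hij2 := hfd i
    have hij3 := hfd j
    have : dist (e i) (e j) ≤ dist (e i) (f j) + dist (e j) (f j) := by
      rw [h1] at hij2; exact dist_triangle_right _ _ _
    linarith [hfd i, hfd j, h1 ▸ hij2]
  have : Countable D := Dcnt.to_subtype
  exact Function.Injective.countable hinj

lemma gauss_moment_lt_top (k : ℕ) :
    ∫⁻ x : ℝ, ((‖x‖₊ : ℝ≥0∞)) ^ (2 * k) ∂(gaussianReal 0 1) < ∞ := by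
  have hpdf : ∀ x : ℝ, gaussianPDFReal 0 1 x
      = (Real.sqrt (2*Real.pi))⁻¹ * Real.exp (-x^2/2) := by
    intro x; simp [gaussianPDFReal]
  rw [gaussianReal_of_var_ne_zero 0 one_ne_zero]
  rw [lintegral_withDensity_eq_lintegral_mul _ (measurable_gaussianPDF 0 1)
    (by fun_prop)]
  have hpt : ∀ x : ℝ, (gaussianPDF 0 1 x * (‖x‖₊ : ℝ≥0∞) ^ (2*k))
      = ENNReal.ofReal (gaussianPDFReal 0 1 x * |x| ^ (2*k)) := by
    intro x
    rw [ENNReal.ofReal_mul (gaussianPDFReal_nonneg 0 1 x), gaussianPDF]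
    congr 1
    rw [ENNReal.ofReal_pow (abs_nonneg x)]
    congr 1
    rw [← show ((‖x‖₊ : ℝ≥0∞)) = ENNReal.ofReal |x| from Real.enorm_eq_ofReal_abs x]
  simp only [Pi.mul_apply, hpt]
  have hint : Integrable (fun x : ℝ => gaussianPDFReal 0 1 x * |x| ^ (2*k)) := by
    have hb : ∀ x : ℝ, ‖gaussianPDFReal 0 1 x * |x| ^ (2*k)‖
        ≤ (Real.sqrt (2 * Real.pi))⁻¹ * ((k.factorial : ℝ) * 4 ^ k)
          * Real.exp (-(1/4) * x^2) := by
      intro x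
      rw [Real.norm_eq_abs, abs_of_nonneg (mul_nonneg (gaussianPDFReal_nonneg 0 1 x)
        (pow_nonneg (abs_nonneg x) _)), hpdf]
      have hxk : |x| ^ (2*k) ≤ (k.factorial : ℝ) * 4^k * Real.exp (x^2/4) := by
        have h1 : |x| ^ (2*k) = (x^2/4)^k * 4^k := by
          rw [div_pow, pow_mul, sq_abs]
          field_simp
        have h2 : (x^2/4)^k ≤ (k.factorial : ℝ) * Real.exp (x^2/4) := by
          have h3 := Real.pow_div_factorial_le_exp (x := x^2/4) (by positivity) k
          rw [div_le_iff₀ (by positivity)] at h3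
          nlinarith [h3, Real.exp_pos (x^2/4), Nat.one_le_cast (α := ℝ).mpr k.factorial_pos]
        calc |x| ^ (2*k) = (x^2/4)^k * 4^k := h1
          _ ≤ ((k.factorial : ℝ) * Real.exp (x^2/4)) * 4^k := by
              apply mul_le_mul_of_nonneg_right h2 (by positivity)
          _ = (k.factorial : ℝ) * 4^k * Real.exp (x^2/4) := by ring
      have hexp : Real.exp (-x^2/2) * Real.exp (x^2/4) = Real.exp (-(1/4) * x^2) := by
        rw [← Real.exp_add]; congr 1; ring
      calc (Real.sqrt (2 * Real.pi))⁻¹ * Real.exp (-x^2/2) * |x|^(2*k)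
          ≤ (Real.sqrt (2 * Real.pi))⁻¹ * Real.exp (-x^2/2)
            * ((k.factorial : ℝ) * 4^k * Real.exp (x^2/4)) := by
            apply mul_le_mul_of_nonneg_left hxk (by positivity)
        _ = (Real.sqrt (2 * Real.pi))⁻¹ * ((k.factorial : ℝ) * 4 ^ k)
            * (Real.exp (-x^2/2) * Real.exp (x^2/4)) := by ring
        _ = _ := by rw [hexp]
    have hmeas : AEStronglyMeasurable (fun x : ℝ => gaussianPDFReal 0 1 x * |x| ^ (2*k))
        (volume : Measure ℝ) := by
      apply Continuous.aestronglyMeasurable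
      have : Continuous (fun x : ℝ => (Real.sqrt (2*Real.pi))⁻¹ * Real.exp (-x^2/2)
          * |x| ^ (2*k)) := by fun_prop
      convert this using 2
      rw [hpdf]
    apply Integrable.mono' (g := fun x : ℝ =>
      (Real.sqrt (2 * Real.pi))⁻¹ * ((k.factorial : ℝ) * 4 ^ k) * Real.exp (-(1/4) * x^2))
      ((integrable_exp_neg_mul_sq (by norm_num : (0:ℝ) < 1/4)).const_mul _)
      hmeas (Filter.Eventually.of_forall hb)
  rw [← ofReal_integral_eq_lintegral_ofReal hint
    (Filter.Eventually.of_forall fun x => mul_nonneg (gaussianPDFReal_nonneg 0 1 x)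
      (pow_nonneg (abs_nonneg x) _))]
  exact ENNReal.ofReal_lt_top

section TaylorBound

variable {H : Type*} [NormedAddCommGroup H] [InnerProductSpace ℝ H]

lemma taylor_bound (p : ℕ) (Θ : H → ℝ) (hΘ : ContDiff ℝ (↑(p + 1)) Θ)
    (K' : ℝ) (hK : ∀ (ξ : H) (v : Fin (p + 1) → H),
      |iteratedFDeriv ℝ (p + 1) Θ ξ v| ≤ K' * ∏ i, ‖v i‖)
    (mbar m : H) :
    |Θ m - (Θ mbar + ∑ n ∈ Finset.Icc 1 p,
        (1 / (n.factorial : ℝ)) * iteratedFDeriv ℝ n Θ mbar (fun _ => m - mbar))|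
      ≤ K' / ((p+1).factorial : ℝ) * ‖m - mbar‖ ^ (p + 1) := by
  set v : H := m - mbar with hv
  set g : ℝ → ℝ := fun t => Θ (mbar + t • v) with hg
  have hΘ' : ContDiff ℝ ((p + 1 : ℕ) : ℕ∞) Θ := hΘ
  have hgC : ContDiff ℝ ((p + 1 : ℕ) : ℕ∞) g :=
    hΘ'.comp (contDiff_const.add (contDiff_id.smul contDiff_const))
  have hs : UniqueDiffOn ℝ (Icc (0:ℝ) 1) := uniqueDiffOn_Icc one_pos
  have hW : ∀ {n : ℕ}, n ≤ p + 1 → ∀ {x : ℝ}, x ∈ Icc (0:ℝ) 1 →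
      iteratedDerivWithin n g (Icc (0:ℝ) 1) x = iteratedFDeriv ℝ n Θ (mbar + x • v) (fun _ => v) := by
    intro n hn x hx
    rw [iteratedDerivWithin_eq_iteratedDeriv'' hgC hs hx hn,
      iteratedDeriv_line Θ hΘ' mbar v hn x]
  have hu : uIcc (0:ℝ) 1 = Icc 0 1 := uIcc_of_le zero_le_one
  have huo : uIoo (0:ℝ) 1 = Ioo 0 1 := uIoo_of_le zero_le_one
  obtain ⟨x', hx', heq⟩ := taylor_mean_remainder_lagrange (f := g) (n := p) (x₀ := 0) (x := 1)
    zero_ne_one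
    (by rw [hu]; exact (hgC.of_le (by exact_mod_cast Nat.cast_le.mpr (Nat.le_succ p))).contDiffOn)
    (by
      rw [hu, huo]
      have hdiff : Differentiable ℝ (iteratedDeriv p g) :=
        hgC.differentiable_iteratedDeriv p (by exact_mod_cast Nat.lt_succ_self p)
      exact hdiff.differentiableOn.congr fun x hx =>
        iteratedDerivWithin_eq_iteratedDeriv'' hgC hs (Ioo_subset_Icc_self hx) (Nat.le_succ p))
  rw [hu] at heq
  rw [huo] at hx'
  have htay : taylorWithinEval g p (Icc (0:ℝ) 1) 0 1
      = Θ mbar + ∑ n ∈ Finset.Icc 1 p,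
        (1 / (n.factorial : ℝ)) * iteratedFDeriv ℝ n Θ mbar (fun _ => v) := by
    rw [taylor_within_apply]
    have hset : Finset.range (p + 1) = insert 0 (Finset.Icc 1 p) := by
      ext k; simp [Finset.mem_range, Finset.mem_Icc, Finset.mem_insert]; omega
    rw [hset, Finset.sum_insert (by simp)]
    congr 1
    · simp [iteratedDerivWithin_zero, hg]
    · apply Finset.sum_congr rfl
      intro n hn
      rw [hW (by simp at hn; omega) (by norm_num : (0:ℝ) ∈ Icc (0:ℝ) 1)]
      rw [show mbar + (0:ℝ) • v = mbar by simp]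
      simp [smul_eq_mul, one_div]
  have hg1 : g 1 = Θ m := by simp [hg, hv]
  have hrem := heq
  rw [htay, hg1] at hrem
  rw [hrem]
  rw [hW le_rfl (Ioo_subset_Icc_self hx')]
  have hKb := hK (mbar + x' • v) (fun _ => v)
  rw [Finset.prod_const, Finset.card_univ, Fintype.card_fin] at hKb
  rw [abs_div, abs_mul]
  simp only [sub_zero, one_pow, abs_one, mul_one, Nat.abs_cast]
  rw [show K' / ((p+1).factorial : ℝ) * ‖m - mbar‖ ^ (p+1)
      = (K' * ‖m - mbar‖ ^ (p+1)) / ((p+1).factorial : ℝ) by ring]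
  gcongr

end TaylorBound

lemma coord_moment (a : ℝ) (w : ℝ≥0) (k : ℕ) :
    ∫⁻ x, (ENNReal.ofReal ((x - a)^2))^k ∂(gaussianReal a w)
      = (w : ℝ≥0∞)^k * ∫⁻ x : ℝ, ((‖x‖₊ : ℝ≥0∞)) ^ (2 * k) ∂(gaussianReal 0 1) := by
  have hGmeas : Measurable fun x : ℝ => (ENNReal.ofReal ((x - a)^2))^k := by fun_prop
  have h1 : gaussianReal a w = (gaussianReal 0 w).map (· + a) := by
    rw [gaussianReal_map_add_const (μ := 0) (v := w) a, zero_add]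
  rw [h1, lintegral_map hGmeas (measurable_id'.add_const a)]
  simp only [add_sub_cancel_right]
  have h2 : gaussianReal 0 w = (gaussianReal 0 1).map ((Real.sqrt w) * ·) := by
    rw [gaussianReal_map_const_mul (μ := 0) (v := 1) (Real.sqrt w)]
    congr 1
    · ring
    · ext
      push_cast
      rw [Real.sq_sqrt w.coe_nonneg]
      simp
  rw [h2, lintegral_map (by fun_prop) (measurable_id'.const_mul _)]
  have h3 : ∀ x : ℝ, (ENNReal.ofReal ((Real.sqrt w * x)^2))^k
      = (w : ℝ≥0∞)^k * ((‖x‖₊ : ℝ≥0∞)) ^ (2 * k) := by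
    intro x
    rw [mul_pow, ENNReal.ofReal_mul (by positivity), mul_pow]
    congr 1
    · rw [Real.sq_sqrt w.coe_nonneg, ENNReal.ofReal_coe_nnreal]
    · rw [pow_mul]
      congr 1
      rw [show ((‖x‖₊ : ℝ≥0∞)) = ENNReal.ofReal |x| from Real.enorm_eq_ofReal_abs x, ← ENNReal.ofReal_pow (abs_nonneg x), sq_abs]
  simp only [h3]
  rw [lintegral_const_mul _ (by fun_prop)]

lemma rpow_cancel {x : ℝ≥0∞} {k : ℝ} (hk : k ≠ 0) : (x ^ k) ^ (1/k) = x := by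
  rw [← ENNReal.rpow_mul, mul_one_div_cancel hk, ENNReal.rpow_one]

lemma rpow_cancel' {x : ℝ≥0∞} {k : ℝ} (hk : k ≠ 0) : (x ^ (1/k)) ^ k = x := by
  rw [← ENNReal.rpow_mul, one_div_mul_cancel hk, ENNReal.rpow_one]

lemma lintegral_finset_sum_pow_le {α : Type*} [MeasurableSpace α] (μ : Measure α) {ι : Type*}
    (F : ι → α → ℝ≥0∞) (hF : ∀ i, Measurable (F i)) {k : ℝ} (hk : 1 ≤ k) (s : Finset ι) :
    (∫⁻ a, (∑ i ∈ s, F i a) ^ k ∂μ) ^ (1/k) ≤ ∑ i ∈ s, (∫⁻ a, (F i a) ^ k ∂μ) ^ (1/k) := by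
  classical
  have hk0 : (0:ℝ) < k := lt_of_lt_of_le one_pos hk
  induction s using Finset.induction with
  | empty =>
    simp only [Finset.sum_empty]
    rw [ENNReal.zero_rpow_of_pos hk0, lintegral_zero, ENNReal.zero_rpow_of_pos (by positivity)]
  | insert i s hni IH =>
    simp only [Finset.sum_insert hni]
    calc (∫⁻ a, (F i a + ∑ j ∈ s, F j a) ^ k ∂μ) ^ (1/k)
        ≤ (∫⁻ a, (F i a) ^ k ∂μ) ^ (1/k) + (∫⁻ a, (∑ j ∈ s, F j a) ^ k ∂μ) ^ (1/k) :=
          ENNReal.lintegral_Lp_add_le (hF i).aemeasurable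
            (Finset.measurable_sum s fun j _ => hF j).aemeasurable hk
      _ ≤ _ := add_le_add le_rfl IH

lemma lintegral_tsum_pow_le {α : Type*} [MeasurableSpace α] (μ : Measure α) {ι : Type*}
    [Countable ι] (F : ι → α → ℝ≥0∞) (hF : ∀ i, Measurable (F i)) {k : ℝ} (hk : 1 ≤ k) :
    ∫⁻ a, (∑' i, F i a) ^ k ∂μ ≤ (∑' i, (∫⁻ a, (F i a) ^ k ∂μ) ^ (1/k)) ^ k := by
  classical
  have hk0 : (0:ℝ) < k := lt_of_lt_of_le one_pos hk
  have hkne : k ≠ 0 := hk0.ne'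
  -- pointwise: (∑')^k = ⨆ over finsets
  have hpt : ∀ a, (∑' i, F i a) ^ k = ⨆ s : Finset ι, (∑ i ∈ s, F i a) ^ k := by
    intro a
    rw [ENNReal.tsum_eq_iSup_sum]
    apply le_antisymm
    · set L := ⨆ s : Finset ι, (∑ i ∈ s, F i a) ^ k with hL
      have h1 : ∀ s : Finset ι, (∑ i ∈ s, F i a) ≤ L ^ (1/k) := by
        intro s
        rw [← rpow_cancel (x := ∑ i ∈ s, F i a) hkne]
        exact ENNReal.rpow_le_rpow (le_iSup (fun s : Finset ι => (∑ i ∈ s, F i a) ^ k) s)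
          (by positivity)
      calc (⨆ s : Finset ι, ∑ i ∈ s, F i a) ^ k ≤ (L ^ (1/k)) ^ k :=
            ENNReal.rpow_le_rpow (iSup_le h1) hk0.le
        _ = L := rpow_cancel' hkne
    · exact iSup_le fun s => ENNReal.rpow_le_rpow
        (le_iSup (fun s : Finset ι => ∑ i ∈ s, F i a) s) hk0.le
  simp only [hpt]
  rw [lintegral_iSup_directed]
  · apply iSup_le
    intro s
    have h1 := lintegral_finset_sum_pow_le μ F hF hk s
    have h2 : (∫⁻ a, (∑ i ∈ s, F i a) ^ k ∂μ) =
        ((∫⁻ a, (∑ i ∈ s, F i a) ^ k ∂μ) ^ (1/k)) ^ k := (rpow_cancel' hkne).symm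
    rw [h2]
    exact ENNReal.rpow_le_rpow (h1.trans (ENNReal.sum_le_tsum s)) hk0.le
  · exact fun s => ((Finset.measurable_sum s fun j _ => hF j).pow_const _).aemeasurable
  · intro s t
    refine ⟨s ∪ t, fun a => ?_, fun a => ?_⟩ <;>
      exact ENNReal.rpow_le_rpow (Finset.sum_le_sum_of_subset (by simp)) hk0.le

lemma expected_norm_pow_le {H : Type*} [NormedAddCommGroup H] [InnerProductSpace ℝ H]
    [CompleteSpace H] [MeasurableSpace H] [BorelSpace H]
    (p : ℕ) (mbar : H) (C : H →L[ℝ] H)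
    (hCpos : ∀ x : H, 0 ≤ ⟪C x, x⟫)
    {ι : Type*} [Countable ι] (e : HilbertBasis ι ℝ H)
    (htr : Summable fun i => ⟪C (e i), e i⟫)
    (ε : ℝ) (hε : 0 < ε) (μ : Measure H) [IsProbabilityMeasure μ]
    (hmap : ∀ b : H, μ.map (fun s => ⟪s, b⟫) =
      gaussianReal ⟪mbar, b⟫ (Real.toNNReal (ε * ⟪C b, b⟫))) :
    ∫⁻ m, ((‖m - mbar‖₊ : ℝ≥0∞)) ^ ((p:ℝ)+1) ∂μ
      ≤ (ENNReal.ofReal ε) ^ (((p:ℝ)+1)/2)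
        * (ENNReal.ofReal (∑' i, ⟪C (e i), e i⟫)) ^ (((p:ℝ)+1)/2)
        * (∫⁻ x : ℝ, ((‖x‖₊ : ℝ≥0∞)) ^ (2 * (p+1)) ∂(gaussianReal 0 1)) ^ ((1:ℝ)/2) := by
  set k : ℝ := (p:ℝ) + 1 with hkdef
  have hk1 : 1 ≤ k := by simp [hkdef]
  have hk0 : (0:ℝ) < k := lt_of_lt_of_le one_pos hk1
  have hkne : k ≠ 0 := hk0.ne'
  have hkcast : k = ((p+1 : ℕ) : ℝ) := by push_cast; ring
  set Mk : ℝ≥0∞ := ∫⁻ x : ℝ, ((‖x‖₊ : ℝ≥0∞)) ^ (2 * (p+1)) ∂(gaussianReal 0 1) with hMkdef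
  set S : ℝ := ∑' i, ⟪C (e i), e i⟫ with hSdef
  set F : ι → H → ℝ≥0∞ := fun i m => ENNReal.ofReal (⟪m - mbar, e i⟫^2) with hFdef
  have hFmeas : ∀ i, Measurable (F i) := by
    intro i
    apply Measurable.ennreal_ofReal
    have : Continuous fun m : H => ⟪m - mbar, e i⟫^2 :=
      (Continuous.inner (continuous_id.sub continuous_const) continuous_const).pow 2
    exact this.measurable
  have hnormmeas : Measurable fun m : H => ((‖m - mbar‖₊ : ℝ≥0∞)) :=
    (continuous_id.sub continuous_const).nnnorm.measurable.coe_nnreal_ennreal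
  -- pointwise identity
  have hpt : ∀ m : H, ∑' i, F i m = ((‖m - mbar‖₊ : ℝ≥0∞)) ^ (2:ℕ) := by
    intro m
    set x := m - mbar
    have hsum : HasSum (fun i => ⟪x, e i⟫^2) (‖x‖^2) := by
      have h := e.hasSum_inner_mul_inner x x
      rw [real_inner_self_eq_norm_sq] at h
      have hf : (fun i => ⟪x, e i⟫^2) = fun i => ⟪x, e i⟫ * ⟪e i, x⟫ := by
        funext i
        rw [real_inner_comm (e i) x, sq]
      rw [hf]; exact h
    rw [← ENNReal.ofReal_tsum_of_nonneg (fun i => sq_nonneg _) hsum.summable,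
      hsum.tsum_eq]
    rw [ENNReal.ofReal_pow (norm_nonneg x)]
    congr 1
    exact ofReal_norm x
  -- per-coordinate moments
  have hFi : ∀ i, ∫⁻ m, F i m ^ k ∂μ
      = (ENNReal.ofReal (ε * ⟪C (e i), e i⟫)) ^ (p+1) * Mk := by
    intro i
    have hinner : Measurable fun m : H => ⟪m, e i⟫ :=
      (Continuous.inner continuous_id continuous_const).measurable
    have hGmeas : Measurable fun x : ℝ => (ENNReal.ofReal ((x - ⟪mbar, e i⟫)^2))^(p+1) := by
      fun_prop
    have h1 : ∀ m : H, F i m ^ k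
        = (ENNReal.ofReal ((⟪m, e i⟫ - ⟪mbar, e i⟫)^2))^(p+1) := by
      intro m
      rw [hkcast, ENNReal.rpow_natCast, hFdef]
      simp only [inner_sub_left]
    simp only [h1]
    rw [← lintegral_map hGmeas hinner, hmap (e i), coord_moment]
    rfl
  -- Minkowski bound on the 2(p+1) moment
  have hT : ∫⁻ m, (∑' i, F i m) ^ k ∂μ
      ≤ (ENNReal.ofReal ε * ENNReal.ofReal S * Mk ^ (1/k)) ^ k := by
    refine (lintegral_tsum_pow_le μ F hFmeas hk1).trans ?_
    apply ENNReal.rpow_le_rpow _ hk0.le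
    have heach : ∀ i, (∫⁻ m, F i m ^ k ∂μ) ^ (1/k)
        = ENNReal.ofReal (ε * ⟪C (e i), e i⟫) * Mk ^ (1/k) := by
      intro i
      rw [hFi i, ENNReal.mul_rpow_of_nonneg _ _ (by positivity)]
      congr 1
      rw [← ENNReal.rpow_natCast _ (p+1), ← hkcast, rpow_cancel hkne]
    calc ∑' i, (∫⁻ m, F i m ^ k ∂μ) ^ (1/k)
        = ∑' i, ENNReal.ofReal (ε * ⟪C (e i), e i⟫) * Mk ^ (1/k) := by
          exact tsum_congr heach
      _ = (∑' i, ENNReal.ofReal (ε * ⟪C (e i), e i⟫)) * Mk ^ (1/k) := ENNReal.tsum_mul_right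
      _ = ENNReal.ofReal ε * ENNReal.ofReal S * Mk ^ (1/k) := by
          congr 1
          have : ∀ i, ENNReal.ofReal (ε * ⟪C (e i), e i⟫)
              = ENNReal.ofReal ε * ENNReal.ofReal ⟪C (e i), e i⟫ := fun i =>
            ENNReal.ofReal_mul hε.le
          simp only [this]
          rw [ENNReal.tsum_mul_left]
          congr 1
          exact (ENNReal.ofReal_tsum_of_nonneg (fun i => hCpos (e i)) htr).symm
      _ ≤ ENNReal.ofReal ε * ENNReal.ofReal S * Mk ^ (1/k) := le_rfl
  -- Cauchy-Schwarz step
  have hconj : Real.HolderConjugate 2 2 := Real.HolderConjugate.two_two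
  have hCS := ENNReal.lintegral_mul_le_Lp_mul_Lq μ hconj
    (f := fun m => ((‖m - mbar‖₊ : ℝ≥0∞)) ^ k) (g := fun _ => 1)
    (hnormmeas.pow_const _).aemeasurable aemeasurable_const
  simp only [Pi.mul_apply, mul_one, ENNReal.one_rpow, lintegral_one, measure_univ,
    mul_one, ENNReal.one_rpow] at hCS
  have hCS2 : ∫⁻ m, ((‖m - mbar‖₊ : ℝ≥0∞)) ^ k ∂μ
      ≤ (∫⁻ m, (∑' i, F i m) ^ k ∂μ) ^ ((1:ℝ)/2) := by
    refine hCS.trans (le_of_eq ?_)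
    congr 1
    apply lintegral_congr
    intro a
    rw [hpt a, ← ENNReal.rpow_natCast ((‖a - mbar‖₊ : ℝ≥0∞)) 2, ← ENNReal.rpow_mul,
      ← ENNReal.rpow_mul]
    norm_num
    rw [mul_comm k 2]
  refine hCS2.trans ?_
  calc (∫⁻ m, (∑' i, F i m) ^ k ∂μ) ^ ((1:ℝ)/2)
      ≤ ((ENNReal.ofReal ε * ENNReal.ofReal S * Mk ^ (1/k)) ^ k) ^ ((1:ℝ)/2) :=
        ENNReal.rpow_le_rpow hT (by positivity)
    _ = (ENNReal.ofReal ε) ^ (k/2) * (ENNReal.ofReal S) ^ (k/2) * Mk ^ ((1:ℝ)/2) := by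
        rw [← ENNReal.rpow_mul]
        rw [ENNReal.mul_rpow_of_nonneg _ _ (by positivity),
          ENNReal.mul_rpow_of_nonneg _ _ (by positivity)]
        rw [← ENNReal.rpow_mul]
        rw [show k * (1/2) = k/2 by ring, show 1/k * (k/2) = 1/2 by field_simp]


/-- If `Θ : H → ℝ` is `(p+1)` times continuously Fréchet differentiable with
uniformly bounded `(p+1)`-st derivative, and `m ~ N(mbar, ε • C)` with `C` positive
self-adjoint trace class, then the expected absolute truncation error of the `p`-th order
Taylor expansion of `Θ` about `mbar` is `O(ε^{(p+1)/2})` as `ε → 0`. -/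
theorem expected_taylor_remainder_higher_order
    {H : Type*} [NormedAddCommGroup H] [InnerProductSpace ℝ H] [CompleteSpace H]
    [TopologicalSpace.SeparableSpace H] [MeasurableSpace H] [BorelSpace H]
    (p : ℕ) (hp : 1 ≤ p)
    (Θ : H → ℝ) (hΘ : ContDiff ℝ (↑(p + 1)) Θ)
    (K : ℝ)
    (hK : ∀ (ξ : H) (v : Fin (p + 1) → H),
      |iteratedFDeriv ℝ (p + 1) Θ ξ v| ≤ K * ∏ i, ‖v i‖)
    (mbar : H) (C : H →L[ℝ] H)
    (hCsa : ∀ x y : H, ⟪C x, y⟫ = ⟪x, C y⟫)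
    (hCpos : ∀ x : H, 0 ≤ ⟪C x, x⟫)
    {ι : Type*} (e : HilbertBasis ι ℝ H)
    (htr : Summable fun i => ⟪C (e i), e i⟫) :
    ∃ M : ℝ, ∀ ε : ℝ, 0 < ε → ∀ μ : Measure H, IsGaussianH μ mbar (ε • C) →
      ∫ m, |Θ m - (Θ mbar + ∑ n ∈ Finset.Icc 1 p,
          (1 / (n.factorial : ℝ)) * iteratedFDeriv ℝ n Θ mbar (fun _ => m - mbar))| ∂μ ≤
        M * ε ^ (((p : ℝ) + 1) / 2) := by
  classical
  haveI : Countable ι := countable_index_of_hilbertBasis e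
  set K' : ℝ := max K 0 with hK'def
  have hK'0 : 0 ≤ K' := le_max_right K 0
  have hK' : ∀ (ξ : H) (v : Fin (p + 1) → H),
      |iteratedFDeriv ℝ (p + 1) Θ ξ v| ≤ K' * ∏ i, ‖v i‖ := fun ξ v =>
    (hK ξ v).trans (mul_le_mul_of_nonneg_right (le_max_left K 0)
      (Finset.prod_nonneg fun i _ => norm_nonneg _))
  set Mk : ℝ≥0∞ := ∫⁻ x : ℝ, ((‖x‖₊ : ℝ≥0∞)) ^ (2 * (p+1)) ∂(gaussianReal 0 1) with hMkdef
  have hMk : Mk < ∞ := gauss_moment_lt_top (p+1)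
  set S : ℝ := ∑' i, ⟪C (e i), e i⟫ with hSdef
  set q : ℝ := ((p : ℝ) + 1) / 2 with hqdef
  set cR : ℝ := ((ENNReal.ofReal S) ^ (((p:ℝ)+1)/2) * Mk ^ ((1:ℝ)/2)).toReal with hcRdef
  have hcR0 : 0 ≤ cR := ENNReal.toReal_nonneg
  refine ⟨K' / (((p+1).factorial : ℕ) : ℝ) * cR, ?_⟩
  intro ε hε μ hμ
  obtain ⟨hprob, hmap⟩ := hμ
  haveI := hprob
  have hmap' : ∀ b : H, μ.map (fun s => ⟪s, b⟫)
      = gaussianReal ⟪mbar, b⟫ (Real.toNNReal (ε * ⟪C b, b⟫)) := by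
    intro b
    rw [hmap b]
    congr 2
    rw [ContinuousLinearMap.smul_apply, real_inner_smul_left]
  have hmom := expected_norm_pow_le p mbar C hCpos e htr ε hε μ hmap'
  rw [← hMkdef, ← hSdef] at hmom
  have hcont : Continuous fun m : H => ‖m - mbar‖ ^ (p+1) :=
    ((continuous_id.sub continuous_const).norm).pow (p+1)
  have hlin : ∀ m : H, ENNReal.ofReal (‖m - mbar‖ ^ (p+1))
      = ((‖m - mbar‖₊ : ℝ≥0∞)) ^ ((p:ℝ)+1) := by
    intro m
    rw [ENNReal.ofReal_pow (norm_nonneg _), show ENNReal.ofReal ‖m - mbar‖ = ((‖m - mbar‖₊ : ℝ≥0∞)) from ofReal_norm _,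
      ← ENNReal.rpow_natCast]
    norm_num
  have hfin : ENNReal.ofReal ε ^ (((p:ℝ)+1)/2) * (ENNReal.ofReal S) ^ (((p:ℝ)+1)/2)
      * Mk ^ ((1:ℝ)/2) ≠ ∞ := by
    apply ENNReal.mul_ne_top
    apply ENNReal.mul_ne_top
    · exact (ENNReal.rpow_lt_top_of_nonneg (by positivity) ENNReal.ofReal_ne_top).ne
    · exact (ENNReal.rpow_lt_top_of_nonneg (by positivity) ENNReal.ofReal_ne_top).ne
    · exact (ENNReal.rpow_lt_top_of_nonneg (by positivity) hMk.ne).ne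
  have hint : Integrable (fun m : H => ‖m - mbar‖ ^ (p+1)) μ := by
    refine ⟨hcont.aestronglyMeasurable, ?_⟩
    rw [hasFiniteIntegral_iff_norm]
    have heq : ∀ m : H, ENNReal.ofReal ‖‖m - mbar‖ ^ (p+1)‖
        = ((‖m - mbar‖₊ : ℝ≥0∞)) ^ ((p:ℝ)+1) := by
      intro m
      rw [Real.norm_eq_abs, abs_of_nonneg (by positivity), hlin m]
    simp only [heq]
    exact lt_of_le_of_lt hmom (lt_top_iff_ne_top.mpr hfin)
  have hI : ∫ m, ‖m - mbar‖ ^ (p+1) ∂μ ≤ ε ^ q * cR := by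
    rw [integral_eq_lintegral_of_nonneg_ae
      (Filter.Eventually.of_forall fun m => by positivity) hcont.aestronglyMeasurable]
    simp only [hlin]
    have h2 := ENNReal.toReal_mono hfin hmom
    refine h2.trans (le_of_eq ?_)
    rw [ENNReal.toReal_mul, ENNReal.toReal_mul, ← ENNReal.toReal_rpow,
      ENNReal.toReal_ofReal hε.le]
    rw [hcRdef, ENNReal.toReal_mul, hqdef]
    ring
  have htb := taylor_bound p Θ hΘ K' hK' mbar
  calc ∫ m, |Θ m - (Θ mbar + ∑ n ∈ Finset.Icc 1 p,
          (1 / (n.factorial : ℝ)) * iteratedFDeriv ℝ n Θ mbar (fun _ => m - mbar))| ∂μ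
      ≤ ∫ m, K' / (((p+1).factorial : ℕ) : ℝ) * ‖m - mbar‖ ^ (p+1) ∂μ := by
        apply integral_mono_of_nonneg
          (Filter.Eventually.of_forall fun m => abs_nonneg _)
          (hint.const_mul _)
          (Filter.Eventually.of_forall fun m => htb m)
    _ = K' / (((p+1).factorial : ℕ) : ℝ) * ∫ m, ‖m - mbar‖ ^ (p+1) ∂μ :=
        integral_const_mul _ _
    _ ≤ K' / (((p+1).factorial : ℕ) : ℝ) * (ε ^ q * cR) := by
        apply mul_le_mul_of_nonneg_left hI (by positivity)
    _ = K' / (((p+1).factorial : ℕ) : ℝ) * cR * ε ^ (((p : ℝ) + 1) / 2) := by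
        rw [hqdef]; ring
end
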